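/- Let q be a prime power and d ≥ 2 an integer with q ≡ 1 (mod d). Then every near-linear cyclotomic orthomorphism θ of index d over F_q is orthogonal to precisely (q − 3d − 1)/d linear orthomorphisms. -/

import Mathlib

/-- An orthomorphism over a finite field: a permutation `θ` such that
`x ↦ θ x - x` is also a permutation. -/
def IsOrthomorphism {F : Type*} [Field F] [Fintype F] (θ : F → F) : Prop :=
  Function.Bijective θ ∧ Function.Bijective (fun x => θ x - x)

/-- Bijectivity criterion for a "two-multiplier" cyclotomic-type map. -/
lemma crit_aux {F : Type*} [Field F] [Fintype F] {d : ℕ} (hd : d ≠ 0) (m₀ m₁ : F) (f : F → F)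
    (hf0 : f 0 = 0)
    (hfa : ∀ x : F, x ≠ 0 → (∃ z : F, x = z ^ d) → f x = m₀ * x)
    (hfb : ∀ x : F, x ≠ 0 → ¬ (∃ z : F, x = z ^ d) → f x = m₁ * x)
    (hnp : ∃ u : F, u ≠ 0 ∧ ¬ ∃ z : F, u = z ^ d) :
    Function.Bijective f ↔ m₀ ≠ 0 ∧ m₁ ≠ 0 ∧ ∃ w : F, w ≠ 0 ∧ m₀ = m₁ * w ^ d := by
  constructor
  · intro hbij
    have h0 : m₀ ≠ 0 := by
      intro h
      have h1 : f 1 = 0 := by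
        rw [hfa 1 one_ne_zero ⟨1, (one_pow d).symm⟩, h, zero_mul]
      exact one_ne_zero (hbij.injective (h1.trans hf0.symm))
    have h1 : m₁ ≠ 0 := by
      intro h
      obtain ⟨u, hu, hup⟩ := hnp
      have h2 : f u = 0 := by rw [hfb u hu hup, h, zero_mul]
      exact hu (hbij.injective (h2.trans hf0.symm))
    refine ⟨h0, h1, ?_⟩
    by_contra hw
    push_neg at hw
    set y := m₁⁻¹ * m₀ with hy
    have hy0 : y ≠ 0 := mul_ne_zero (inv_ne_zero h1) h0
    have hyp : ¬ ∃ z : F, y = z ^ d := by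
      rintro ⟨z, hz⟩
      have hz0 : z ≠ 0 := by
        intro h; rw [h, zero_pow hd] at hz
        exact hy0 hz
      exact (hw z hz0) (by rw [← hz, hy, mul_inv_cancel_left₀ h1])
    have hfy : f y = m₀ := by
      rw [hfb y hy0 hyp, hy]; field_simp
    have hf1 : f 1 = m₀ := by
      rw [hfa 1 one_ne_zero ⟨1, (one_pow d).symm⟩, mul_one]
    have : y = 1 := hbij.injective (hfy.trans hf1.symm)
    exact hyp ⟨1, by rw [this, one_pow]⟩
  · rintro ⟨h0, h1, w, hw, hmw⟩
    apply Finite.injective_iff_bijective.mp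
    intro x y hxy
    by_cases hx : x = 0
    · subst hx
      rw [hf0] at hxy
      by_cases hy : y = 0
      · exact hy.symm
      · exfalso
        by_cases hyp : ∃ z : F, y = z ^ d
        · rw [hfa y hy hyp] at hxy
          exact (mul_ne_zero h0 hy) hxy.symm
        · rw [hfb y hy hyp] at hxy
          exact (mul_ne_zero h1 hy) hxy.symm
    · by_cases hy : y = 0
      · subst hy
        rw [hf0] at hxy
        exfalso
        by_cases hxp : ∃ z : F, x = z ^ d
        · rw [hfa x hx hxp] at hxy
          exact (mul_ne_zero h0 hx) hxy
        · rw [hfb x hx hxp] at hxy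
          exact (mul_ne_zero h1 hx) hxy
      · by_cases hxp : ∃ z : F, x = z ^ d <;> by_cases hyp : ∃ z : F, y = z ^ d
        · rw [hfa x hx hxp, hfa y hy hyp] at hxy
          exact mul_left_cancel₀ h0 hxy
        · exfalso
          rw [hfa x hx hxp, hfb y hy hyp] at hxy
          obtain ⟨z, hz⟩ := hxp
          refine hyp ⟨w * z, ?_⟩
          have : m₁ * y = m₁ * (w * z) ^ d := by
            rw [← hxy, hz, hmw, mul_pow]; ring
          exact mul_left_cancel₀ h1 this
        · exfalso
          rw [hfb x hx hxp, hfa y hy hyp] at hxy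
          obtain ⟨z, hz⟩ := hyp
          refine hxp ⟨w * z, ?_⟩
          have : m₁ * x = m₁ * (w * z) ^ d := by
            rw [hxy, hz, hmw, mul_pow]; ring
          exact mul_left_cancel₀ h1 this
        · rw [hfb x hx hxp, hfb y hy hyp] at hxy
          exact mul_left_cancel₀ h1 hxy

/-- The set of nonzero `d`-th powers in a finite field has `(q-1)/d` elements,
and (for `d ≥ 2`, `d ∣ q-1`) nonpowers exist. -/
lemma powset_aux {F : Type*} [Field F] [Fintype F] {d : ℕ} (hd : 2 ≤ d)
    (hdvd : d ∣ Fintype.card F - 1) :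
    ({x : F | x ≠ 0 ∧ ∃ z : F, x = z ^ d}).ncard = (Fintype.card F - 1) / d ∧
      ∃ u : F, u ≠ 0 ∧ ¬ ∃ z : F, u = z ^ d := by
  classical
  obtain ⟨g, hg⟩ := IsCyclic.exists_generator (α := Fˣ)
  have hog : orderOf g = Fintype.card Fˣ := by
    rw [orderOf_eq_card_of_forall_mem_zpowers hg, Nat.card_eq_fintype_card]
  set U : Set Fˣ := {u : Fˣ | ∃ v : Fˣ, u = v ^ d} with hU
  have hUz : U = (Subgroup.zpowers (g ^ d) : Subgroup Fˣ) := by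
    ext u
    constructor
    · rintro ⟨v, rfl⟩
      obtain ⟨k, hk⟩ := Subgroup.mem_zpowers_iff.mp (hg v)
      refine Subgroup.mem_zpowers_iff.mpr ⟨k, ?_⟩
      rw [← hk, ← zpow_natCast g d, ← zpow_natCast (g ^ (k:ℤ)) d, ← zpow_mul, ← zpow_mul,
        mul_comm]
    · intro hu
      obtain ⟨k, hk⟩ := Subgroup.mem_zpowers_iff.mp hu
      refine ⟨g ^ k, ?_⟩
      rw [← hk, ← zpow_natCast g d, ← zpow_natCast (g ^ k) d, ← zpow_mul, ← zpow_mul, mul_comm]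
  have hcardU : U.ncard = (Fintype.card F - 1) / d := by
    rw [hUz, ← Nat.card_coe_set_eq, SetLike.coe_sort_coe,
      Nat.card_zpowers (g ^ d), orderOf_pow, hog, Fintype.card_units,
      Nat.gcd_eq_right hdvd]
  have hDU : {x : F | x ≠ 0 ∧ ∃ z : F, x = z ^ d} = Units.val '' U := by
    ext x
    constructor
    · rintro ⟨hx, z, rfl⟩
      have hz : z ≠ 0 := fun h => hx (by rw [h, zero_pow (by omega)])
      exact ⟨Units.mk0 z hz ^ d, ⟨Units.mk0 z hz, rfl⟩, by simp⟩
    · rintro ⟨u, ⟨v, rfl⟩, rfl⟩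
      exact ⟨Units.ne_zero _, v, by simp⟩
  have hlt : U.ncard < Fintype.card F - 1 := by
    rw [hcardU]
    have h2 : 2 ≤ Fintype.card F := Fintype.one_lt_card
    have hd' : d ≤ Fintype.card F - 1 := Nat.le_of_dvd (by omega) hdvd
    exact Nat.div_lt_self (by omega) (by omega)
  constructor
  · rw [hDU, Set.ncard_image_of_injective _ Units.val_injective, hcardU]
  · by_contra hnp
    push_neg at hnp
    have hUuniv : U = Set.univ := by
      rw [Set.eq_univ_iff_forall]
      intro u
      obtain ⟨z, hz⟩ := hnp u.val (Units.ne_zero u)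
      have hz0 : z ≠ 0 := fun h => (Units.ne_zero u) (by rw [hz, h, zero_pow (by omega)])
      refine ⟨Units.mk0 z hz0, Units.ext ?_⟩
      simpa using hz
    rw [hUuniv, Set.ncard_univ, Nat.card_eq_fintype_card, Fintype.card_units] at hlt
    omega

lemma ratio_eq_aux {F : Type*} [Field F] {u v u' v' : F} (hv : v ≠ 0) (hv' : v' ≠ 0)
    (h : u * v⁻¹ = u' * v'⁻¹) : u * v' = u' * v := by
  rw [← div_eq_mul_inv, ← div_eq_mul_inv, div_eq_div_iff hv hv'] at h
  exact h

/-- Theorem 4.9.  Let `q ≡ 1 (mod d)` with `d ≥ 2`.  Any near-linear orthomorphism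
`θ ∈ 𝒟_d(q)` (multiplier `a₀` on the class of nonzero `d`-th powers, common
multiplier `a₁ ≠ a₀` on the remaining classes) is orthogonal to precisely
`(q - 3d - 1)/d` linear orthomorphisms `x ↦ c·x` (with `c ∉ {0, 1}`). -/
theorem thm_1orthnearlin {F : Type*} [Field F] [Fintype F]
    (d : ℕ) (hd : 2 ≤ d) (hdvd : d ∣ Fintype.card F - 1)
    (a₀ a₁ : F) (hne : a₀ ≠ a₁) (θ : F → F)
    (hθ0 : θ 0 = 0)
    (hθa : ∀ x : F, x ≠ 0 → (∃ z : F, x = z ^ d) → θ x = a₀ * x)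
    (hθb : ∀ x : F, x ≠ 0 → ¬ (∃ z : F, x = z ^ d) → θ x = a₁ * x)
    (horth : IsOrthomorphism θ) :
    {c : F | c ≠ 0 ∧ c ≠ 1 ∧ Function.Bijective (fun x => θ x - c * x)}.ncard =
      (Fintype.card F - 3 * d - 1) / d := by
  classical
  have hd0 : d ≠ 0 := by omega
  obtain ⟨hcardD, hnp⟩ := powset_aux hd hdvd
  set D : Set F := {x : F | x ≠ 0 ∧ ∃ z : F, x = z ^ d} with hDdef
  set S : Set F := {c : F | c ≠ 0 ∧ c ≠ 1 ∧ Function.Bijective (fun x => θ x - c * x)}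
    with hSdef
  set e : F → F := fun c => (a₀ - c) * (a₁ - c)⁻¹ with hedef
  have heval : ∀ c : F, e c = (a₀ - c) * (a₁ - c)⁻¹ := fun c => rfl
  -- bijectivity criterion
  have hcrit : ∀ c : F, Function.Bijective (fun x => θ x - c * x) ↔
      ((a₀ - c) ≠ 0 ∧ (a₁ - c) ≠ 0 ∧ ∃ w : F, w ≠ 0 ∧ a₀ - c = (a₁ - c) * w ^ d) := by
    intro c
    refine crit_aux hd0 (a₀ - c) (a₁ - c) (fun x => θ x - c * x) ?_ ?_ ?_ hnp
    · show θ 0 - c * 0 = 0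
      rw [hθ0]; ring
    · intro x hx hp
      show θ x - c * x = (a₀ - c) * x
      rw [hθa x hx hp]; ring
    · intro x hx hp
      show θ x - c * x = (a₁ - c) * x
      rw [hθb x hx hp]; ring
  -- facts from θ being an orthomorphism
  have hb0 : Function.Bijective (fun x => θ x - (0 : F) * x) := by
    simpa using horth.1
  have hb1 : Function.Bijective (fun x => θ x - (1 : F) * x) := by
    simpa using horth.2
  have h0 := (hcrit 0).mp hb0
  have h1 := (hcrit 1).mp hb1
  simp only [sub_zero] at h0
  obtain ⟨ha₀, ha₁, w₀, hw₀, hw₀e⟩ := h0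
  obtain ⟨ha₀1, ha₁1, w₁, hw₁, hw₁e⟩ := h1
  have ha₁0' : a₁ - 0 ≠ 0 := by simpa using ha₁
  -- injectivity of the Möbius map e on {c | a₁ - c ≠ 0}
  have hinj : ∀ c c' : F, a₁ - c ≠ 0 → a₁ - c' ≠ 0 → e c = e c' → c = c' := by
    intro c c' h h' hee
    rw [heval, heval] at hee
    have h2 := ratio_eq_aux h h' hee
    have h3 : (a₀ - a₁) * (c - c') = 0 := by linear_combination h2
    rcases mul_eq_zero.mp h3 with h4 | h4
    · exact absurd (by linear_combination h4 : a₀ = a₁) hne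
    · linear_combination h4
  -- e never takes the value 1
  have hene1 : ∀ c : F, a₁ - c ≠ 0 → e c ≠ 1 := by
    intro c h h1
    rw [heval] at h1
    have h1' : (a₀ - c) * (a₁ - c)⁻¹ = 1 * (1 : F)⁻¹ := by rw [h1, inv_one, mul_one]
    have h2 := ratio_eq_aux h one_ne_zero h1'
    exact hne (by linear_combination h2)
  -- e c lands in D when the criterion holds
  have heD : ∀ c w : F, a₁ - c ≠ 0 → w ≠ 0 → a₀ - c = (a₁ - c) * w ^ d → e c ∈ D := by
    intro c w h hw hwe
    refine ⟨?_, w, ?_⟩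
    · rw [heval]
      apply mul_ne_zero _ (inv_ne_zero h)
      rw [hwe]
      exact mul_ne_zero h (pow_ne_zero d hw)
    · rw [heval, hwe, mul_comm (a₁ - c) (w ^ d), mul_assoc, mul_inv_cancel₀ h, mul_one]
  have heD' : ∀ c : F, a₁ - c ≠ 0 → a₀ - c ≠ 0 → e c ∈ D →
      ∃ w : F, w ≠ 0 ∧ a₀ - c = (a₁ - c) * w ^ d := by
    rintro c h h0 ⟨hne0, z, hz⟩
    rw [heval] at hz
    have hz0 : z ≠ 0 := by
      intro hzz
      rw [hzz, zero_pow hd0] at hz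
      exact (mul_ne_zero h0 (inv_ne_zero h)) hz
    refine ⟨z, hz0, ?_⟩
    calc a₀ - c = (a₀ - c) * (a₁ - c)⁻¹ * (a₁ - c) := by
            rw [mul_assoc, inv_mul_cancel₀ h, mul_one]
      _ = z ^ d * (a₁ - c) := by rw [hz]
      _ = (a₁ - c) * z ^ d := mul_comm _ _
  -- members of S have nonzero denominator
  have hSden : ∀ c ∈ S, a₁ - c ≠ 0 := by
    intro c hc
    exact ((hcrit c).mp hc.2.2).2.1
  -- the image of S under e
  have himg : e '' S = D \ {1, e 0, e 1} := by
    ext y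
    constructor
    · rintro ⟨c, hc, rfl⟩
      obtain ⟨hc0, hc1, hcb⟩ := hc
      obtain ⟨hm0, hm1, w, hw, hwe⟩ := (hcrit c).mp hcb
      refine ⟨heD c w hm1 hw hwe, ?_⟩
      simp only [Set.mem_insert_iff, Set.mem_singleton_iff, not_or]
      refine ⟨hene1 c hm1, ?_, ?_⟩
      · intro h
        exact hc0 (hinj c 0 hm1 ha₁0' h)
      · intro h
        exact hc1 (hinj c 1 hm1 ha₁1 h)
    · rintro ⟨⟨hy0, z, hz⟩, hyT⟩
      simp only [Set.mem_insert_iff, Set.mem_singleton_iff, not_or] at hyT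
      obtain ⟨hy1, hyE0, hyE1⟩ := hyT
      have hy1' : y - 1 ≠ 0 := sub_ne_zero.mpr hy1
      set c : F := (y * a₁ - a₀) * (y - 1)⁻¹ with hcdef
      have hkey : (a₁ - c) * (y - 1) = a₀ - a₁ := by
        rw [hcdef]
        field_simp
        ring
      have hm1 : a₁ - c ≠ 0 := by
        intro h
        rw [h, zero_mul] at hkey
        exact hne (by linear_combination -hkey)
      have hec : a₀ - c = y * (a₁ - c) := by
        apply mul_right_cancel₀ hy1'
        have h5 : (a₀ - c) * (y - 1) = y * a₀ - y * a₁ := by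
          rw [hcdef]
          field_simp
          ring
        rw [h5, mul_assoc, hkey]
        ring
      have hm0 : a₀ - c ≠ 0 := by
        rw [hec]; exact mul_ne_zero hy0 hm1
      have hecy : e c = y := by
        rw [heval, hec, mul_assoc, mul_inv_cancel₀ hm1, mul_one]
      have hz0 : z ≠ 0 := by
        intro h
        rw [h, zero_pow hd0] at hz
        exact hy0 hz
      have hwe : a₀ - c = (a₁ - c) * z ^ d := by
        rw [hec, hz]; ring
      have hcS : c ∈ S := by
        refine ⟨?_, ?_, (hcrit c).mpr ⟨hm0, hm1, z, hz0, hwe⟩⟩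
        · intro h
          exact hyE0 (by rw [← hecy, h])
        · intro h
          exact hyE1 (by rw [← hecy, h])
      exact ⟨c, hcS, hecy⟩
  -- counting
  have hinjS : Set.InjOn e S := fun c hc c' hc' hee =>
    hinj c c' (hSden c hc) (hSden c' hc') hee
  have hD1 : (1 : F) ∈ D := ⟨one_ne_zero, 1, (one_pow d).symm⟩
  have he0D : e 0 ∈ D := heD 0 w₀ ha₁0' hw₀ (by simpa using hw₀e)
  have he1D : e 1 ∈ D := heD 1 w₁ ha₁1 hw₁ hw₁e
  have he0ne1 : e 0 ≠ 1 := hene1 0 ha₁0'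
  have he1ne1 : e 1 ≠ 1 := hene1 1 ha₁1
  have he0ne : e 0 ≠ e 1 := by
    intro h
    exact zero_ne_one (hinj 0 1 ha₁0' ha₁1 h)
  have hTD : ({1, e 0, e 1} : Set F) ⊆ D := by
    intro x hx
    simp only [Set.mem_insert_iff, Set.mem_singleton_iff] at hx
    rcases hx with rfl | rfl | rfl
    · exact hD1
    · exact he0D
    · exact he1D
  have hT3 : ({1, e 0, e 1} : Set F).ncard = 3 := by
    rw [Set.ncard_insert_of_notMem (by simp [he0ne1.symm, he1ne1.symm] : (1:F) ∉ ({e 0, e 1} : Set F)),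
      Set.ncard_insert_of_notMem (by simpa using he0ne), Set.ncard_singleton]
  have h3le : 3 ≤ D.ncard := by
    rw [← hT3]
    exact Set.ncard_le_ncard hTD (Set.toFinite D)
  have hcount : S.ncard = D.ncard - 3 := by
    rw [← Set.ncard_image_of_injOn hinjS, himg, Set.ncard_diff hTD, hT3]
  -- final arithmetic
  obtain ⟨m, hm⟩ := hdvd
  have hdpos : 0 < d := by omega
  have hmval : (Fintype.card F - 1) / d = m := by
    rw [hm, Nat.mul_div_cancel_left _ hdpos]
  have h3m : 3 ≤ m := by
    rw [hcardD, hmval] at h3le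
    exact h3le
  have hq2 : 2 ≤ Fintype.card F := Fintype.one_lt_card
  have hstep : Fintype.card F - 3 * d - 1 = (m - 3) * d := by
    rw [tsub_mul]
    have hm' : Fintype.card F - 1 = m * d := by rw [hm, mul_comm]
    generalize hk : m * d = k at hm' ⊢
    omega
  rw [hcount, hcardD, hmval, hstep, Nat.mul_div_cancel _ hdpos]
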